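/- For every real c > r there exists a constant C = C(F,c) > 0 such that for every nonzero integral ideal 𝔍 ⊆ 𝔬 and every t > 0: ∑_{α ∈ 𝔍^{−1}, α ≠ 0} f_c(t·σ(α)) ≤ C · N(𝔍)^{3c} · t^{−c}. -/

import Mathlib

open NumberField
open scoped ENNReal nonZeroDivisors Classical

/-- `cap c x = min(1, x^{-c})`, with the convention `min(1, 0^{-c}) = 1` (i.e. the value of
`min(1, |x|^{-c})` when the coordinate vanishes). -/
noncomputable def cap (c x : ℝ) : ℝ := if x = 0 then 1 else min 1 (x ^ (-c))

/-- The function `f_c(x⃗) = ∏_{real w} min(1,|x_w|^{-c}) ∏_{complex w} min(1,|x_w|^{-2c})`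
on the mixed space `ℝ^{r₁} × ℂ^{r₂}` of a number field `F`. -/
noncomputable def fcFun (F : Type*) [Field F] [NumberField F] (c : ℝ)
    (x : NumberField.mixedEmbedding.mixedSpace F) : ℝ :=
  (∏ w, cap c |x.1 w|) * ∏ w, cap (2 * c) (‖x.2 w‖)

lemma cap_le_max_rpow {c' c : ℝ} (hc : 0 < c) (hcc : c ≤ c') {x : ℝ} (hx : 0 ≤ x) :
    cap c' x ≤ (max 1 x) ^ (-c) := by
  unfold cap
  rcases eq_or_lt_of_le hx with h0 | h0
  · simp [← h0]
  rw [if_neg h0.ne']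
  rcases le_total x 1 with h1 | h1
  · rw [max_eq_left h1, Real.one_rpow]
    exact min_le_left _ _
  · rw [max_eq_right h1]
    refine le_trans (min_le_right _ _) ?_
    exact Real.rpow_le_rpow_of_exponent_le h1 (by linarith)

lemma cap_nonneg {c x : ℝ} (hx : 0 ≤ x) : 0 ≤ cap c x := by
  unfold cap
  split
  · norm_num
  · exact le_min zero_le_one (Real.rpow_nonneg hx _)

lemma one_le_prod_real {ι : Type*} {s : Finset ι} {f : ι → ℝ} (hf : ∀ i ∈ s, 1 ≤ f i) :
    1 ≤ ∏ i ∈ s, f i := by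
  calc (1:ℝ) = ∏ _i ∈ s, 1 := (Finset.prod_const_one).symm
    _ ≤ ∏ i ∈ s, f i := Finset.prod_le_prod (fun _ _ => zero_le_one) hf

lemma single_le_prod_real {ι : Type*} [Fintype ι] {f : ι → ℝ} (hf : ∀ i, 1 ≤ f i) (j : ι) :
    f j ≤ ∏ i, f i := by
  classical
  rw [← Finset.prod_erase_mul Finset.univ f (Finset.mem_univ j)]
  exact le_mul_of_one_le_left (zero_le_one.trans (hf j)) (one_le_prod_real fun i _ => hf i)

lemma fcFun_le (F : Type*) [Field F] [NumberField F] {c : ℝ} (hc : 0 < c)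
    (x : NumberField.mixedEmbedding.mixedSpace F) (hx : 0 < ‖x‖) :
    fcFun F c x ≤ ‖x‖ ^ (-c) := by
  have hA1 : (1:ℝ) ≤ ∏ w, max 1 |x.1 w| := one_le_prod_real fun w _ => le_max_left _ _
  have hB1 : (1:ℝ) ≤ ∏ w, max 1 (‖x.2 w‖) :=
    one_le_prod_real fun w _ => le_max_left _ _
  have habs : ∀ w, (0:ℝ) ≤ ‖x.2 w‖ := fun w => norm_nonneg _
  have h1 : fcFun F c x ≤
      ((∏ w, max 1 |x.1 w|) * ∏ w, max 1 (‖x.2 w‖)) ^ (-c) := by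
    have e1 : ((∏ w, max 1 |x.1 w|) * ∏ w, max 1 (‖x.2 w‖)) ^ (-c)
        = (∏ w, (max 1 |x.1 w|) ^ (-c)) * ∏ w, (max 1 (‖x.2 w‖)) ^ (-c) := by
      rw [Real.mul_rpow (by linarith) (by linarith),
        Real.finset_prod_rpow _ _ (fun w _ => by positivity) (-c),
        Real.finset_prod_rpow _ _ (fun w _ => by positivity) (-c)]
    rw [e1]
    refine mul_le_mul ?_ ?_ (Finset.prod_nonneg fun w _ => cap_nonneg (habs w))
      (Finset.prod_nonneg fun w _ => by positivity)
    · exact Finset.prod_le_prod (fun w _ => cap_nonneg (abs_nonneg _))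
        (fun w _ => cap_le_max_rpow hc le_rfl (abs_nonneg _))
    · exact Finset.prod_le_prod (fun w _ => cap_nonneg (habs w))
        (fun w _ => cap_le_max_rpow hc (by linarith) (habs w))
  have h2 : ‖x‖ ≤ (∏ w, max 1 |x.1 w|) * ∏ w, max 1 (‖x.2 w‖) := by
    have hABpos : (0:ℝ) ≤ (∏ w, max 1 |x.1 w|) * ∏ w, max 1 (‖x.2 w‖) := by
      nlinarith
    rw [Prod.norm_def]
    refine max_le ((pi_norm_le_iff_of_nonneg hABpos).2 fun w => ?_)
      ((pi_norm_le_iff_of_nonneg hABpos).2 fun w => ?_)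
    · have h3 : |x.1 w| ≤ ∏ w, max 1 |x.1 w| :=
        (le_max_right _ _).trans (single_le_prod_real (fun i => le_max_left 1 |x.1 i|) w)
      calc ‖x.1 w‖ = |x.1 w| := Real.norm_eq_abs _
        _ ≤ ∏ w, max 1 |x.1 w| := h3
        _ ≤ _ := le_mul_of_one_le_right (by linarith) hB1
    · have h3 : ‖x.2 w‖ ≤ ∏ w, max 1 (‖x.2 w‖) :=
        (le_max_right _ _).trans (single_le_prod_real (fun i => le_max_left 1 (‖x.2 i‖)) w)
      calc ‖x.2 w‖ = ‖x.2 w‖ := rfl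
        _ ≤ ∏ w, max 1 (‖x.2 w‖) := h3
        _ ≤ _ := le_mul_of_one_le_left (Finset.prod_nonneg fun i _ => le_trans zero_le_one (le_max_left _ _)) hA1
  exact h1.trans (Real.rpow_le_rpow_of_nonpos hx h2 (by linarith))

lemma tsum_pi_fin (g : ℤ → ℝ≥0∞) : ∀ r : ℕ,
    ∑' n : Fin r → ℤ, ∏ i, g (n i) = (∑' m, g m) ^ r := by
  intro r
  induction r with
  | zero =>
    simp only [Finset.univ_eq_empty, Finset.prod_empty, pow_zero]
    rw [tsum_eq_single (fun (i : Fin 0) => (0:ℤ)) (fun b hb => by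
      exact absurd (Subsingleton.elim b _) hb)]
  | succ r ih =>
    rw [← (Fin.consEquiv fun _ : Fin (r + 1) => ℤ).tsum_eq]
    have : ∀ p : ℤ × (Fin r → ℤ),
        (∏ i, g ((Fin.consEquiv fun _ : Fin (r + 1) => ℤ) p i)) = g p.1 * ∏ i, g (p.2 i) := by
      intro p
      rw [Fin.prod_univ_succ]
      simp [Fin.consEquiv]
    simp_rw [this]
    rw [ENNReal.tsum_prod']
    simp_rw [ENNReal.tsum_mul_left]
    rw [ENNReal.tsum_mul_right, ih, pow_succ]
    ring

lemma tsum_pi_fintype {ι : Type*} [Fintype ι] (g : ℤ → ℝ≥0∞) :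
    ∑' n : ι → ℤ, ∏ i, g (n i) = (∑' m, g m) ^ (Fintype.card ι) := by
  classical
  let e := Fintype.equivFin ι
  let e2 : (Fin (Fintype.card ι) → ℤ) ≃ (ι → ℤ) := Equiv.arrowCongr e.symm (Equiv.refl ℤ)
  rw [← e2.tsum_eq]
  rw [← tsum_pi_fin g (Fintype.card ι)]
  refine tsum_congr fun m => ?_
  refine Fintype.prod_equiv e (fun i => g (e2 m i)) (fun j => g (m j)) fun i => ?_
  simp [e2, Equiv.arrowCongr]

lemma summable_int_one_add_abs {p : ℝ} (hp : 1 < p) :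
    Summable fun m : ℤ => ((1:ℝ) + |(m:ℝ)|) ^ (-p) := by
  have hnat : Summable fun n : ℕ => ((1:ℝ) + n) ^ (-p) := by
    have h := Real.summable_nat_rpow.mpr (by linarith : -p < -1)
    have := (summable_nat_add_iff 1).mpr h
    refine this.congr fun n => ?_
    push_cast
    ring_nf
  refine Summable.of_nat_of_neg ?_ ?_ <;>
    · refine hnat.congr fun n => ?_
      push_cast
      simp [abs_of_nonneg, Nat.cast_nonneg]

open Module Module.Free in
lemma Z_ne_top (F : Type*) [Field F] [NumberField F] {c : ℝ}
    (hc : (Module.finrank ℚ F : ℝ) < c) :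
    (∑' β : {x : 𝓞 F // x ≠ 0},
      ENNReal.ofReal (‖NumberField.mixedEmbedding F (algebraMap (𝓞 F) F (β : 𝓞 F))‖ ^ (-c)))
      ≠ ⊤ := by
  classical
  have hr0 : 0 < (Module.finrank ℚ F : ℝ) := by
    have : 0 < Module.finrank ℚ F := Module.finrank_pos
    exact_mod_cast this
  have hc0 : 0 < c := hr0.trans hc
  set rr : ℕ := Module.finrank ℚ F with hrr
  set ι := ChooseBasisIndex ℤ (𝓞 F)
  set b := RingOfIntegers.basis F with hb
  set L := NumberField.mixedEmbedding.latticeBasis F with hL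
  set p : ℝ := c / rr with hpdef
  have hp : 1 < p := (one_lt_div hr0).mpr hc
  have hp0 : 0 < p := lt_trans one_pos hp
  have hpr : (rr : ℝ) * p = c := by
    rw [hpdef, mul_div_cancel₀ _ hr0.ne']
  have hcard : Fintype.card ι = rr := by
    rw [← Module.finrank_eq_card_chooseBasisIndex, NumberField.RingOfIntegers.rank]
  set K' : ℝ := max ‖(L.equivFunL : NumberField.mixedEmbedding.mixedSpace F →L[ℝ] (ι → ℝ))‖ 1
    with hK'
  have hK'1 : 1 ≤ K' := le_max_right _ _
  have hK'0 : 0 < K' := lt_of_lt_of_le one_pos hK'1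
  set g : ℤ → ℝ≥0∞ := fun m => ENNReal.ofReal ((1 + |(m : ℝ)|) ^ (-p)) with hg
  have hterm : ∀ β : {x : 𝓞 F // x ≠ 0},
      ENNReal.ofReal (‖NumberField.mixedEmbedding F (algebraMap (𝓞 F) F (β : 𝓞 F))‖ ^ (-c))
        ≤ ENNReal.ofReal (K' ^ c * 2 ^ c) * ∏ i, g (b.repr (β : 𝓞 F) i) := by
    intro β
    set x := NumberField.mixedEmbedding F (algebraMap (𝓞 F) F (β : 𝓞 F)) with hx
    set v : ι → ℝ := L.equivFun x with hv
    have hvi : ∀ i, v i = ((b.repr (β : 𝓞 F) i : ℤ) : ℝ) := by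
      intro i
      rw [hv, Basis.equivFun_apply, hx, hL,
        NumberField.mixedEmbedding.latticeBasis_repr_apply,
        NumberField.integralBasis_repr_apply]
      push_cast
      rfl
    obtain ⟨i₀, hi₀⟩ : ∃ i, b.repr (β : 𝓞 F) i ≠ 0 := by
      by_contra h
      push_neg at h
      have : b.repr (β : 𝓞 F) = 0 := Finsupp.ext h
      have : (β : 𝓞 F) = 0 := by
        simpa using congrArg b.repr.symm this
      exact β.2 this
    have hv1 : 1 ≤ ‖v‖ := by
      refine le_trans ?_ (norm_le_pi_norm v i₀)
      rw [Real.norm_eq_abs, hvi i₀, ← Int.cast_abs]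
      exact_mod_cast Int.one_le_abs hi₀
    have hvK : ‖v‖ ≤ K' * ‖x‖ := by
      have h1 : ‖(L.equivFunL : NumberField.mixedEmbedding.mixedSpace F →L[ℝ] (ι → ℝ)) x‖
          ≤ ‖(L.equivFunL : NumberField.mixedEmbedding.mixedSpace F →L[ℝ] (ι → ℝ))‖ * ‖x‖ :=
        ContinuousLinearMap.le_opNorm _ _
      have h2 : (L.equivFunL : NumberField.mixedEmbedding.mixedSpace F →L[ℝ] (ι → ℝ)) x = v := rfl
      rw [h2] at h1
      exact h1.trans (mul_le_mul_of_nonneg_right (le_max_left _ _) (norm_nonneg _))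
    clear hx hv
    clear_value x v
    have hx0 : 0 < ‖x‖ := by nlinarith [norm_nonneg x]
    have step1 : ‖x‖ ^ (-c) ≤ K' ^ c * ‖v‖ ^ (-c) := by
      have hdiv : ‖v‖ / K' ≤ ‖x‖ := (div_le_iff₀ hK'0).mpr (by linarith [hvK])
      have h := Real.rpow_le_rpow_of_nonpos (by positivity) hdiv (neg_nonpos.mpr hc0.le)
      calc ‖x‖ ^ (-c) ≤ (‖v‖ / K') ^ (-c) := h
        _ = K' ^ c * ‖v‖ ^ (-c) := by
          rw [Real.div_rpow (by linarith) hK'0.le, Real.rpow_neg hK'0.le, div_eq_mul_inv, inv_inv]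
          ring
    have step2 : ‖v‖ ^ (-c) ≤ 2 ^ c * ∏ i, (1 + |v i|) ^ (-p) := by
      set Q : ℝ := ∏ i, (1 + |v i|) with hQ
      have hQ1 : 1 ≤ Q := one_le_prod_real fun i _ => le_add_of_nonneg_right (abs_nonneg _)
      have hQle : Q ≤ (2 * ‖v‖) ^ (rr : ℕ) := by
        have : Q ≤ ∏ _i : ι, (2 * ‖v‖) := by
          refine Finset.prod_le_prod (fun i _ => by positivity) fun i _ => ?_
          have := norm_le_pi_norm v i
          rw [Real.norm_eq_abs] at this
          linarith
        rwa [Finset.prod_const, Finset.card_univ, hcard] at this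
      have hQp : Q ^ p ≤ (2 * ‖v‖) ^ c := by
        have h1 : Q ^ p ≤ ((2 * ‖v‖) ^ (rr : ℕ)) ^ p :=
          Real.rpow_le_rpow (by positivity) hQle hp0.le
        have h2 : ((2 * ‖v‖) ^ (rr : ℕ)) ^ p = (2 * ‖v‖) ^ c := by
          rw [← Real.rpow_natCast (2 * ‖v‖) rr, ← Real.rpow_mul (by positivity : (0:ℝ) ≤ 2 * ‖v‖), hpr]
        rwa [h2] at h1
      have hmain : (2 * ‖v‖) ^ (-c) ≤ Q ^ (-p) := by
        rw [Real.rpow_neg (by positivity : (0:ℝ) ≤ 2 * ‖v‖), Real.rpow_neg (by positivity : (0:ℝ) ≤ Q)]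
        exact inv_anti₀ (by positivity) hQp
      have hsplit : ‖v‖ ^ (-c) = 2 ^ c * (2 * ‖v‖) ^ (-c) := by
        rw [Real.mul_rpow (by norm_num : (0:ℝ) ≤ 2) (by positivity : (0:ℝ) ≤ ‖v‖), Real.rpow_neg (by norm_num : (0:ℝ) ≤ 2)]
        rw [← mul_assoc, mul_inv_cancel₀ (by positivity : (2:ℝ) ^ c ≠ 0), one_mul]
      rw [hsplit]
      have := mul_le_mul_of_nonneg_left hmain (by positivity : (0:ℝ) ≤ 2 ^ c)
      refine this.trans (le_of_eq ?_)
      rw [hQ, ← Real.finset_prod_rpow _ _ (fun i _ => by positivity) (-p)]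
    have hfinal : ‖x‖ ^ (-c) ≤ (K' ^ c * 2 ^ c) * ∏ i, (1 + |v i|) ^ (-p) := by
      calc ‖x‖ ^ (-c) ≤ K' ^ c * ‖v‖ ^ (-c) := step1
        _ ≤ K' ^ c * (2 ^ c * ∏ i, (1 + |v i|) ^ (-p)) :=
          mul_le_mul_of_nonneg_left step2 (by positivity)
        _ = (K' ^ c * 2 ^ c) * ∏ i, (1 + |v i|) ^ (-p) := by ring
    calc ENNReal.ofReal (‖x‖ ^ (-c)) ≤
        ENNReal.ofReal ((K' ^ c * 2 ^ c) * ∏ i, (1 + |v i|) ^ (-p)) :=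
          ENNReal.ofReal_le_ofReal hfinal
      _ = ENNReal.ofReal (K' ^ c * 2 ^ c) * ENNReal.ofReal (∏ i, (1 + |v i|) ^ (-p)) := by
          rw [ENNReal.ofReal_mul (by positivity)]
      _ = ENNReal.ofReal (K' ^ c * 2 ^ c) * ∏ i, ENNReal.ofReal ((1 + |v i|) ^ (-p)) := by
          rw [ENNReal.ofReal_prod_of_nonneg (fun i _ => by positivity)]
      _ = ENNReal.ofReal (K' ^ c * 2 ^ c) * ∏ i, g (b.repr (β : 𝓞 F) i) := by
          rw [hg]
          congr 1
          exact Finset.prod_congr rfl fun i _ => by rw [hvi i]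
  have hinj : Function.Injective
      (fun β : {x : 𝓞 F // x ≠ 0} => (fun i => b.repr (β : 𝓞 F) i : ι → ℤ)) := by
    intro β₁ β₂ h
    have : b.repr (β₁ : 𝓞 F) = b.repr (β₂ : 𝓞 F) := Finsupp.ext fun i => congrFun h i
    exact Subtype.ext (b.repr.injective this)
  have hS₁ : (∑' m : ℤ, g m) ≠ ⊤ := by
    rw [hg, ← ENNReal.ofReal_tsum_of_nonneg (fun m => by positivity)
      (summable_int_one_add_abs hp)]
    exact ENNReal.ofReal_ne_top
  have hle : (∑' β : {x : 𝓞 F // x ≠ 0},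
      ENNReal.ofReal (‖NumberField.mixedEmbedding F (algebraMap (𝓞 F) F (β : 𝓞 F))‖ ^ (-c)))
      ≤ ENNReal.ofReal (K' ^ c * 2 ^ c) * (∑' m : ℤ, g m) ^ (Fintype.card ι) := by
   calc (∑' β : {x : 𝓞 F // x ≠ 0},
      ENNReal.ofReal (‖NumberField.mixedEmbedding F (algebraMap (𝓞 F) F (β : 𝓞 F))‖ ^ (-c)))
      ≤ ∑' β : {x : 𝓞 F // x ≠ 0},
          ENNReal.ofReal (K' ^ c * 2 ^ c) * ∏ i, g (b.repr (β : 𝓞 F) i) :=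
        ENNReal.tsum_le_tsum hterm
    _ = ENNReal.ofReal (K' ^ c * 2 ^ c) *
        ∑' β : {x : 𝓞 F // x ≠ 0}, ∏ i, g (b.repr (β : 𝓞 F) i) := ENNReal.tsum_mul_left
    _ ≤ ENNReal.ofReal (K' ^ c * 2 ^ c) * ∑' m : ι → ℤ, ∏ i, g (m i) := by
        gcongr
        exact ENNReal.tsum_comp_le_tsum_of_injective hinj fun m => ∏ i, g (m i)
    _ = ENNReal.ofReal (K' ^ c * 2 ^ c) * (∑' m : ℤ, g m) ^ (Fintype.card ι) := by
        rw [tsum_pi_fintype g]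
  exact ne_top_of_le_ne_top
    (ENNReal.mul_ne_top ENNReal.ofReal_ne_top (ENNReal.pow_ne_top hS₁)) hle

lemma norm_sigma_pos (F : Type*) [Field F] [NumberField F] {β : 𝓞 F} (hβ : β ≠ 0) :
    0 < ‖NumberField.mixedEmbedding F (algebraMap (𝓞 F) F β)‖ := by
  rw [norm_pos_iff]
  intro h
  have h2 : algebraMap (𝓞 F) F β = 0 :=
    NumberField.mixedEmbedding_injective F (by rw [h, map_zero])
  exact hβ (NumberField.RingOfIntegers.coe_injective (by rw [h2, map_zero]))

/-- For `c > r = [F:ℚ]` there is `C = C(F,c) > 0` such that for every nonzero integral ideal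
`𝔍` and every `t > 0`, `∑_{0 ≠ α ∈ 𝔍⁻¹} f_c(t σ(α)) ≤ C N(𝔍)^{3c} t^{-c}`. -/
theorem stmt_18 (F : Type*) [Field F] [NumberField F] (c : ℝ)
    (hc : (Module.finrank ℚ F : ℝ) < c) :
    ∃ C : ℝ, 0 < C ∧
      ∀ J : Ideal (𝓞 F), J ≠ ⊥ → ∀ t : ℝ, 0 < t →
        (∑' α : {x : F // x ∈ ((J : FractionalIdeal (𝓞 F)⁰ F))⁻¹ ∧ x ≠ 0},
            ENNReal.ofReal (fcFun F c (t • NumberField.mixedEmbedding F (α : F))))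
          ≤ ENNReal.ofReal (C * (Ideal.absNorm J : ℝ) ^ (3 * c) * t ^ (-c)) := by
  classical
  have hr0 : (0:ℝ) < (Module.finrank ℚ F : ℝ) := by
    have : 0 < Module.finrank ℚ F := Module.finrank_pos
    exact_mod_cast this
  have hc0 : 0 < c := hr0.trans hc
  set Z : ℝ≥0∞ := ∑' β : {x : 𝓞 F // x ≠ 0},
      ENNReal.ofReal (‖NumberField.mixedEmbedding F (algebraMap (𝓞 F) F (β : 𝓞 F))‖ ^ (-c))
    with hZdef
  have hZ : Z ≠ ⊤ := Z_ne_top F hc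
  refine ⟨Z.toReal + 1, by positivity, ?_⟩
  intro J hJ t ht
  set N : ℕ := Ideal.absNorm J with hNdef
  have hN0 : 0 < N := by
    rw [hNdef]
    exact Nat.pos_of_ne_zero (Ideal.absNorm_ne_zero_iff_mem_nonZeroDivisors.mpr
      (mem_nonZeroDivisors_of_ne_zero hJ))
  have hN1 : (1:ℝ) ≤ (N:ℝ) := by exact_mod_cast hN0
  have hmem : ∀ α : {x : F // x ∈ ((J : FractionalIdeal (𝓞 F)⁰ F))⁻¹ ∧ x ≠ 0},
      ∃ b : 𝓞 F, algebraMap (𝓞 F) F b = (N : F) * (α : F) := by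
    intro α
    have h1 : ((N : F)) ∈ (J : FractionalIdeal (𝓞 F)⁰ F) := by
      rw [FractionalIdeal.mem_coeIdeal]
      exact ⟨(N : 𝓞 F), Ideal.absNorm_mem J, by rw [map_natCast]⟩
    have h3 : (N : F) * (α : F) ∈
        (J : FractionalIdeal (𝓞 F)⁰ F) * (J : FractionalIdeal (𝓞 F)⁰ F)⁻¹ :=
      FractionalIdeal.mul_mem_mul h1 α.2.1
    rw [mul_inv_cancel₀ (FractionalIdeal.coeIdeal_ne_zero.mpr hJ)] at h3
    exact (FractionalIdeal.mem_one_iff _).mp h3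
  choose bb hbb using hmem
  have hNF : (N : F) ≠ 0 := by
    exact_mod_cast Nat.cast_ne_zero.mpr hN0.ne'
  have hbb0 : ∀ α, bb α ≠ 0 := by
    intro α h0
    apply α.2.2
    have h1 := hbb α
    rw [h0, map_zero] at h1
    exact (mul_eq_zero.mp h1.symm).resolve_left hNF
  set Φ : {x : F // x ∈ ((J : FractionalIdeal (𝓞 F)⁰ F))⁻¹ ∧ x ≠ 0} → {x : 𝓞 F // x ≠ 0} :=
    fun α => ⟨bb α, hbb0 α⟩ with hΦ
  have hΦinj : Function.Injective Φ := by
    intro α₁ α₂ h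
    have h1 : bb α₁ = bb α₂ := congrArg Subtype.val h
    have h2 : (N : F) * (α₁ : F) = (N : F) * (α₂ : F) := by
      rw [← hbb α₁, ← hbb α₂, h1]
    exact Subtype.ext (mul_left_cancel₀ hNF h2)
  have hnorm : ∀ α, ‖NumberField.mixedEmbedding F (algebraMap (𝓞 F) F (bb α))‖
      = (N : ℝ) * ‖NumberField.mixedEmbedding F (α : F)‖ := by
    intro α
    rw [hbb α]
    have h1 : (N : F) * (α : F) = (N : ℕ) • (α : F) := by
      rw [nsmul_eq_mul]
    rw [h1, map_nsmul, ← Nat.cast_smul_eq_nsmul ℝ, norm_smul, Real.norm_natCast]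
  have hσα : ∀ α : {x : F // x ∈ ((J : FractionalIdeal (𝓞 F)⁰ F))⁻¹ ∧ x ≠ 0},
      0 < ‖NumberField.mixedEmbedding F (α : F)‖ := by
    intro α
    have h1 := norm_sigma_pos F (hbb0 α)
    rw [hnorm α] at h1
    nlinarith [norm_nonneg (NumberField.mixedEmbedding F (α : F))]
  have hNc : (N:ℝ) ^ c * (N:ℝ) ^ (-c) = 1 := by
    rw [← Real.rpow_add (by positivity), add_neg_cancel, Real.rpow_zero]
  have hterm : ∀ α : {x : F // x ∈ ((J : FractionalIdeal (𝓞 F)⁰ F))⁻¹ ∧ x ≠ 0},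
      ENNReal.ofReal (fcFun F c (t • NumberField.mixedEmbedding F (α : F)))
        ≤ ENNReal.ofReal ((N:ℝ) ^ c * t ^ (-c)) *
          ENNReal.ofReal (‖NumberField.mixedEmbedding F (algebraMap (𝓞 F) F ((Φ α : 𝓞 F)))‖ ^ (-c)) := by
    intro α
    have hy : 0 < ‖NumberField.mixedEmbedding F (α : F)‖ := hσα α
    have h1 : fcFun F c (t • NumberField.mixedEmbedding F (α : F))
        ≤ ‖t • NumberField.mixedEmbedding F (α : F)‖ ^ (-c) := by
      refine fcFun_le F hc0 _ ?_
      rw [norm_smul, Real.norm_eq_abs, abs_of_pos ht]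
      positivity
    have h2 : ‖t • NumberField.mixedEmbedding F (α : F)‖ ^ (-c)
        = (N:ℝ) ^ c * t ^ (-c) * ‖NumberField.mixedEmbedding F (algebraMap (𝓞 F) F (bb α))‖ ^ (-c) := by
      rw [hnorm α, norm_smul, Real.norm_eq_abs, abs_of_pos ht,
        Real.mul_rpow ht.le hy.le, Real.mul_rpow (by positivity) hy.le]
      linear_combination (-(t ^ (-c) * ‖NumberField.mixedEmbedding F (α : F)‖ ^ (-c))) * hNc
    have h3 : (Φ α : 𝓞 F) = bb α := rfl
    rw [h3]
    calc ENNReal.ofReal (fcFun F c (t • NumberField.mixedEmbedding F (α : F)))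
        ≤ ENNReal.ofReal ((N:ℝ) ^ c * t ^ (-c) *
            ‖NumberField.mixedEmbedding F (algebraMap (𝓞 F) F (bb α))‖ ^ (-c)) := by
          refine ENNReal.ofReal_le_ofReal (h1.trans (le_of_eq h2))
      _ = _ := ENNReal.ofReal_mul (by positivity)
  have hZle : Z ≤ ENNReal.ofReal (Z.toReal + 1) := by
    conv_lhs => rw [← ENNReal.ofReal_toReal hZ]
    exact ENNReal.ofReal_le_ofReal (by linarith)
  have hfinmul : (N:ℝ) ^ c * t ^ (-c) * (Z.toReal + 1)
      ≤ (Z.toReal + 1) * (N:ℝ) ^ (3 * c) * t ^ (-c) := by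
    have h1 : (N:ℝ) ^ c ≤ (N:ℝ) ^ (3 * c) :=
      Real.rpow_le_rpow_of_exponent_le hN1 (by linarith)
    have h2 : (0:ℝ) ≤ t ^ (-c) := Real.rpow_nonneg ht.le _
    have h3 : (0:ℝ) ≤ Z.toReal := ENNReal.toReal_nonneg
    have h4 := mul_le_mul_of_nonneg_right h1 h2
    calc (N:ℝ) ^ c * t ^ (-c) * (Z.toReal + 1)
        ≤ (N:ℝ) ^ (3 * c) * t ^ (-c) * (Z.toReal + 1) :=
          mul_le_mul_of_nonneg_right h4 (by linarith)
      _ = (Z.toReal + 1) * (N:ℝ) ^ (3 * c) * t ^ (-c) := by ring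
  calc (∑' α : {x : F // x ∈ ((J : FractionalIdeal (𝓞 F)⁰ F))⁻¹ ∧ x ≠ 0},
      ENNReal.ofReal (fcFun F c (t • NumberField.mixedEmbedding F (α : F))))
      ≤ ∑' α : {x : F // x ∈ ((J : FractionalIdeal (𝓞 F)⁰ F))⁻¹ ∧ x ≠ 0},
          ENNReal.ofReal ((N:ℝ) ^ c * t ^ (-c)) *
          ENNReal.ofReal (‖NumberField.mixedEmbedding F (algebraMap (𝓞 F) F ((Φ α : 𝓞 F)))‖ ^ (-c)) :=
        ENNReal.tsum_le_tsum hterm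
    _ = ENNReal.ofReal ((N:ℝ) ^ c * t ^ (-c)) *
        ∑' α : {x : F // x ∈ ((J : FractionalIdeal (𝓞 F)⁰ F))⁻¹ ∧ x ≠ 0},
          ENNReal.ofReal (‖NumberField.mixedEmbedding F (algebraMap (𝓞 F) F ((Φ α : 𝓞 F)))‖ ^ (-c)) :=
        ENNReal.tsum_mul_left
    _ ≤ ENNReal.ofReal ((N:ℝ) ^ c * t ^ (-c)) * Z := by
        gcongr
        rw [hZdef]
        exact ENNReal.tsum_comp_le_tsum_of_injective hΦinj
          (fun β : {x : 𝓞 F // x ≠ 0} =>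
            ENNReal.ofReal (‖NumberField.mixedEmbedding F (algebraMap (𝓞 F) F (β : 𝓞 F))‖ ^ (-c)))
    _ ≤ ENNReal.ofReal ((N:ℝ) ^ c * t ^ (-c)) * ENNReal.ofReal (Z.toReal + 1) := by
        gcongr
    _ = ENNReal.ofReal ((N:ℝ) ^ c * t ^ (-c) * (Z.toReal + 1)) := by
        rw [← ENNReal.ofReal_mul (by positivity)]
    _ ≤ ENNReal.ofReal ((Z.toReal + 1) * (N:ℝ) ^ (3 * c) * t ^ (-c)) :=
        ENNReal.ofReal_le_ofReal hfinmul
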